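/- Let s = σ + it be a complex number with 0 < σ < 1 and |t| > 1. Then for every real p with 1 ≤ p < 1/σ, the function a ↦ ζ(s,a) (the Hurwitz zeta function in the second variable) belongs to L^p(0,1). -/

import Mathlib

open MeasureTheory Complex Real Set Filter

/-- The periodized zeta function `F s a`, i.e. the analytic continuation in `s` of
`∑ k ≥ 1, exp (2πika) / k ^ s`, realized as Mathlib's `expZeta` at the point `a` of the
unit additive circle. -/
noncomputable def periodizedZeta (s : ℂ) (a : ℝ) : ℂ := HurwitzZeta.expZeta (a : UnitAddCircle) s



noncomputable def zTerm (a : ℝ) (n : ℕ) (z : ℂ) : ℂ :=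
  (((n : ℝ) + 1 + a : ℝ) : ℂ) ^ (-z) - (((n : ℝ) + 1 : ℝ) : ℂ) ^ (-z)

lemma hasDerivAt_ofReal_cpow_neg {z : ℂ} (hz : z ≠ 0) {x : ℝ} (hx : 0 < x) :
    HasDerivAt (fun y : ℝ => (y : ℂ) ^ (-z)) (-z * (x : ℂ) ^ (-z - 1)) x := by
  have hr : -z - 1 ≠ -1 := by
    intro h; apply hz; have := congrArg (· + 1) h; simpa [sub_add_cancel] using this
  have h := (hasDerivAt_ofReal_cpow_const' hx.ne' hr).const_mul (-z)
  have hfun : (fun y : ℝ => -z * ((y : ℂ) ^ (-z - 1 + 1) / (-z - 1 + 1)))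
      = fun y : ℝ => (y : ℂ) ^ (-z) := by
    funext y
    have : (-z - 1 + 1 : ℂ) = -z := by ring
    rw [this]
    field_simp [neg_ne_zero.mpr hz]
  rw [hfun] at h
  exact h

lemma zTerm_bound (a : ℝ) (ha : a ∈ Icc (0:ℝ) 1) (n : ℕ) {z : ℂ} (hz : 0 < z.re) :
    ‖zTerm a n z‖ ≤ ‖z‖ * ((n : ℝ) + 1) ^ (-z.re - 1) := by
  have hz0 : z ≠ 0 := fun h => by simp [h] at hz
  set C : ℝ := ‖z‖ * ((n : ℝ) + 1) ^ (-z.re - 1) with hC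
  have hCnn : 0 ≤ C := mul_nonneg (norm_nonneg _) (Real.rpow_nonneg (by positivity) _)
  set S : Set ℝ := Icc ((n : ℝ) + 1) ((n : ℝ) + 2) with hS
  have hderiv : ∀ x ∈ S, HasDerivWithinAt (fun y : ℝ => (y : ℂ) ^ (-z))
      (-z * (x : ℂ) ^ (-z - 1)) S x := fun x hx =>
    (hasDerivAt_ofReal_cpow_neg hz0 (lt_of_lt_of_le (by positivity) hx.1)).hasDerivWithinAt
  have hbound : ∀ x ∈ S, ‖-z * (x : ℂ) ^ (-z - 1)‖ ≤ C := by
    intro x hx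
    have hx0 : (0:ℝ) < x := lt_of_lt_of_le (by positivity) hx.1
    rw [norm_mul, norm_neg]
    have : ‖(x : ℂ) ^ (-z - 1)‖ = x ^ (-z.re - 1) := by
      rw [Complex.norm_cpow_eq_rpow_re_of_pos hx0]
      norm_num
    rw [this, hC]
    refine mul_le_mul_of_nonneg_left ?_ (norm_nonneg _)
    exact Real.rpow_le_rpow_of_nonpos (by positivity) hx.1 (by linarith)
  have hmem1 : (n : ℝ) + 1 ∈ S := ⟨le_refl _, by linarith⟩
  have hmem2 : (n : ℝ) + 1 + a ∈ S := ⟨by linarith [ha.1], by linarith [ha.2]⟩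
  have key := Convex.norm_image_sub_le_of_norm_hasDerivWithin_le hderiv hbound
    (convex_Icc _ _) hmem1 hmem2
  have : ‖((n : ℝ) + 1 + a) - ((n : ℝ) + 1)‖ = a := by
    rw [Real.norm_eq_abs]; rw [_root_.abs_of_nonneg (by linarith [ha.1] : (0:ℝ) ≤ ↑n + 1 + a - (↑n + 1))]; ring
  rw [this] at key
  calc ‖zTerm a n z‖ ≤ C * a := key
    _ ≤ C * 1 := mul_le_mul_of_nonneg_left ha.2 hCnn
    _ = C := mul_one C

lemma summable_aux {t : ℝ} (ht : t < -1) : Summable (fun n : ℕ => ((n : ℝ) + 1) ^ t) := by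
  have h := (Real.summable_nat_rpow (p := t)).mpr ht
  have h2 := (summable_nat_add_iff 1).mpr h
  refine h2.congr fun n => ?_
  push_cast
  ring_nf

noncomputable def zSum (a : ℝ) (z : ℂ) : ℂ := ∑' n : ℕ, zTerm a n z

lemma differentiableOn_zSum (a : ℝ) (ha : a ∈ Icc (0:ℝ) 1) :
    DifferentiableOn ℂ (zSum a) {z : ℂ | 0 < z.re} := by
  have hopen : IsOpen {z : ℂ | 0 < z.re} := isOpen_lt continuous_const Complex.continuous_re
  have hdiff : ∀ n : ℕ, DifferentiableOn ℂ (fun z => zTerm a n z) {z : ℂ | 0 < z.re} := by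
    intro n
    have h1 : ((((n : ℝ) + 1 + a : ℝ)) : ℂ) ≠ 0 := by
      rw [Complex.ofReal_ne_zero]; have := ha.1; positivity
    have h2 : ((((n : ℝ) + 1 : ℝ)) : ℂ) ≠ 0 := by
      rw [Complex.ofReal_ne_zero]; positivity
    intro z _
    exact (((differentiableAt_id.neg).const_cpow (Or.inl h1)).sub
      ((differentiableAt_id.neg).const_cpow (Or.inl h2))).differentiableWithinAt
  refine TendstoLocallyUniformlyOn.differentiableOn
    (F := fun (t : Finset ℕ) (z : ℂ) => ∑ n ∈ t, zTerm a n z) (φ := atTop) ?_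
    (Eventually.of_forall fun t : Finset ℕ => DifferentiableOn.fun_sum fun n _ => hdiff n) hopen
  rw [tendstoLocallyUniformlyOn_iff_forall_isCompact hopen]
  intro K hK hKc
  rcases K.eq_empty_or_nonempty with rfl | hne
  · exact tendstoUniformlyOn_empty
  obtain ⟨z₀, hz₀K, hz₀min⟩ := hKc.exists_isMinOn hne Complex.continuous_re.continuousOn
  obtain ⟨M, hM⟩ := hKc.exists_bound_of_continuousOn continuousOn_id
  have hδ : 0 < z₀.re := hK hz₀K
  apply tendstoUniformlyOn_tsum ((summable_aux (t := -z₀.re - 1) (by linarith)).mul_left M)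
  intro n z hz
  calc ‖zTerm a n z‖ ≤ ‖z‖ * ((n : ℝ) + 1) ^ (-z.re - 1) := zTerm_bound a ha n (hK hz)
    _ ≤ M * ((n : ℝ) + 1) ^ (-z₀.re - 1) := by
        refine mul_le_mul (hM z hz) ?_ (Real.rpow_nonneg (by positivity) _)
          ((norm_nonneg _).trans (hM z hz))
        refine Real.rpow_le_rpow_of_exponent_le (by simp) ?_
        have := hz₀min hz
        simp only [IsMinOn, IsMinFilter] at hz₀min
        have : z₀.re ≤ z.re := hz₀min hz
        linarith

lemma zSum_bound (a : ℝ) (ha : a ∈ Icc (0:ℝ) 1) {z : ℂ} (hz : 0 < z.re) :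
    ‖zSum a z‖ ≤ ‖z‖ * ∑' n : ℕ, ((n : ℝ) + 1) ^ (-z.re - 1) := by
  have hsum : Summable (fun n : ℕ => ((n : ℝ) + 1) ^ (-z.re - 1)) :=
    summable_aux (by linarith)
  rw [zSum, ← tsum_mul_left]
  refine (norm_tsum_le_tsum_norm ?_).trans (Summable.tsum_le_tsum (fun n => zTerm_bound a ha n hz) ?_ ?_)
  · refine (hsum.mul_left ‖z‖).of_nonneg_of_le (fun n => norm_nonneg _)
      (fun n => zTerm_bound a ha n hz)
  · refine (hsum.mul_left ‖z‖).of_nonneg_of_le (fun n => norm_nonneg _)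
      (fun n => zTerm_bound a ha n hz)
  · exact hsum.mul_left ‖z‖

lemma continuousOn_zSum (z : ℂ) (hz : 0 < z.re) :
    ContinuousOn (fun a : ℝ => zSum a z) (Ioo (0:ℝ) 1) := by
  refine continuousOn_tsum (f := fun n (a : ℝ) => zTerm a n z) ?_
    ((summable_aux (t := -z.re - 1) (by linarith)).mul_left ‖z‖) ?_
  · intro n
    refine ContinuousOn.sub ?_ continuousOn_const
    intro a haI
    refine ContinuousAt.continuousWithinAt ?_
    have hc : ContinuousAt (fun x : ℂ => x ^ (-z)) ((((n : ℝ) + 1 + a : ℝ)) : ℂ) := by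
      refine continuousAt_cpow_const ?_
      rw [Complex.mem_slitPlane_iff]
      left
      simp only [Complex.ofReal_re]
      have := haI.1
      positivity
    have h2 : ContinuousAt (fun a : ℝ => ((((n : ℝ) + 1 + a : ℝ)) : ℂ)) a := by fun_prop
    exact ContinuousAt.comp (x := a)
      (g := fun x : ℂ => x ^ (-z)) (f := fun a : ℝ => ((((n : ℝ) + 1 + a : ℝ)) : ℂ)) hc h2
  · intro n a haI
    exact zTerm_bound a ⟨haI.1.le, haI.2.le⟩ n hz

lemma hurwitz_eq_of_one_lt_re (a : ℝ) (ha : a ∈ Ioo (0:ℝ) 1) {z : ℂ} (hz : 1 < z.re) :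
    HurwitzZeta.hurwitzZeta (a : UnitAddCircle) z
      = (a : ℂ) ^ (-z) + riemannZeta z + zSum a z := by
  have hz0 : z ≠ 0 := fun h => by simp [h] at hz; linarith
  have h1 : HasSum (fun n : ℕ => ((n : ℂ) + a) ^ (-z))
      (HurwitzZeta.hurwitzZeta (a : UnitAddCircle) z) := by
    refine (HurwitzZeta.hasSum_hurwitzZeta_of_one_lt_re ⟨ha.1.le, ha.2.le⟩ hz).congr_fun ?_
    intro n
    rw [Complex.cpow_neg, one_div]
  have h2 : HasSum (fun n : ℕ => (((n : ℂ) + 1) + a) ^ (-z))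
      (HurwitzZeta.hurwitzZeta (a : UnitAddCircle) z - (a : ℂ) ^ (-z)) := by
    have := (hasSum_nat_add_iff' (f := fun n : ℕ => ((n : ℂ) + a) ^ (-z)) 1).mpr h1
    simp only [Finset.range_one, Finset.sum_singleton, Nat.cast_zero, zero_add] at this
    refine this.congr_fun fun n => ?_
    push_cast
    ring_nf
  have h3 : HasSum (fun n : ℕ => ((n : ℂ) + 1) ^ (-z)) (riemannZeta z) := by
    have h0 : HasSum (fun n : ℕ => ((n : ℂ)) ^ (-z)) (riemannZeta z) := by
      have := (HurwitzZeta.hasSum_hurwitzZeta_of_one_lt_re (a := 0) ⟨le_refl 0, zero_le_one⟩ hz)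
      rw [show ((0 : ℝ) : UnitAddCircle) = 0 by norm_num, HurwitzZeta.hurwitzZeta_zero] at this
      refine this.congr_fun fun n => ?_
      rw [Complex.cpow_neg, one_div]
      norm_num
    have := (hasSum_nat_add_iff' (f := fun n : ℕ => ((n : ℂ)) ^ (-z)) 1).mpr h0
    simp only [Finset.range_one, Finset.sum_singleton, Nat.cast_zero] at this
    rw [Complex.zero_cpow (neg_ne_zero.mpr hz0), sub_zero] at this
    refine this.congr_fun fun n => ?_
    push_cast
    ring_nf
  have h4 := h2.sub h3
  have h5 : HasSum (fun n : ℕ => zTerm a n z)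
      (HurwitzZeta.hurwitzZeta (a : UnitAddCircle) z - (a : ℂ) ^ (-z) - riemannZeta z) := by
    refine h4.congr_fun fun n => ?_
    rw [zTerm]
    push_cast
    ring_nf
  rw [zSum, h5.tsum_eq]
  ring

lemma hurwitz_eq (a : ℝ) (ha : a ∈ Ioo (0:ℝ) 1) {z : ℂ} (hz : 0 < z.re) (hz1 : z ≠ 1) :
    HurwitzZeta.hurwitzZeta (a : UnitAddCircle) z
      = (a : ℂ) ^ (-z) + riemannZeta z + zSum a z := by
  have ha0 : (a : ℂ) ≠ 0 := Complex.ofReal_ne_zero.mpr ha.1.ne'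
  set V : Set ℂ := {w : ℂ | 0 < w.re} with hV
  have hVopen : IsOpen V := isOpen_lt continuous_const Complex.continuous_re
  have hVconn : IsPreconnected V := (convex_halfSpace_re_gt 0).isPreconnected
  have hGi : Differentiable ℂ fun w : ℂ => 1 / Complex.Gammaℝ w := by
    simpa only [one_div] using Complex.differentiable_Gammaℝ_inv
  set f : ℂ → ℂ := fun w =>
    (w - 1) * (HurwitzZeta.hurwitzZeta (a : UnitAddCircle) w - 1 / (w - 1) / Complex.Gammaℝ w)
      + 1 / Complex.Gammaℝ w with hf
  set g : ℂ → ℂ := fun w =>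
    (w - 1) * ((a : ℂ) ^ (-w) + riemannZeta w + zSum a w - 1 / (w - 1) / Complex.Gammaℝ w)
      + 1 / Complex.Gammaℝ w with hg
  have hzeta_corr : ∀ b : UnitAddCircle, DifferentiableOn ℂ
      (fun w => (w - 1) * (HurwitzZeta.hurwitzZeta b w - 1 / (w - 1) / Complex.Gammaℝ w)) V := by
    intro b w hw
    by_cases hw1 : w = 1
    · subst hw1
      exact (((differentiableAt_id.sub_const 1).mul
        (HurwitzZeta.differentiableAt_hurwitzZeta_sub_one_div b))).differentiableWithinAt
    · refine (((differentiableAt_id.sub_const 1).mul (DifferentiableAt.sub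
        (HurwitzZeta.differentiableAt_hurwitzZeta b hw1) ?_))).differentiableWithinAt
      have heq : (fun w : ℂ => 1 / (w - 1) / Complex.Gammaℝ w)
          = fun w : ℂ => (1 / (w - 1)) * (1 / Complex.Gammaℝ w) := by
        funext w; rw [div_eq_mul_one_div]
      rw [heq]
      refine DifferentiableAt.mul ?_ hGi.differentiableAt
      exact (differentiableAt_const (1:ℂ)).div
        ((differentiableAt_id : DifferentiableAt ℂ id w).sub_const 1) (sub_ne_zero.mpr hw1)
  have hfd : DifferentiableOn ℂ f V := (hzeta_corr _).add hGi.differentiableOn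
  have hgd : DifferentiableOn ℂ g V := by
    have hrz : DifferentiableOn ℂ
        (fun w => (w - 1) * (riemannZeta w - 1 / (w - 1) / Complex.Gammaℝ w)) V := by
      have := hzeta_corr 0
      simpa only [HurwitzZeta.hurwitzZeta_zero] using this
    have hcp : DifferentiableOn ℂ (fun w : ℂ => (a : ℂ) ^ (-w)) V :=
      fun w _ => ((differentiableAt_id.neg).const_cpow (Or.inl ha0)).differentiableWithinAt
    have h1 : DifferentiableOn ℂ
        (fun w => (w - 1) * ((a : ℂ) ^ (-w) + zSum a w)) V :=
      ((differentiableOn_id.sub_const 1).mul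
        (hcp.add (differentiableOn_zSum a ⟨ha.1.le, ha.2.le⟩)))
    have : DifferentiableOn ℂ (fun w =>
        (w - 1) * ((a : ℂ) ^ (-w) + zSum a w)
          + ((w - 1) * (riemannZeta w - 1 / (w - 1) / Complex.Gammaℝ w)
            + 1 / Complex.Gammaℝ w)) V := (h1.add (hrz.add hGi.differentiableOn))
    refine this.congr fun w _ => ?_
    rw [hg]
    ring
  have h2mem : (2 : ℂ) ∈ {w : ℂ | 1 < w.re} := by norm_num
  have hopen' : IsOpen {w : ℂ | 1 < w.re} := isOpen_lt continuous_const Complex.continuous_re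
  have hfg : f =ᶠ[nhds (2 : ℂ)] g := by
    filter_upwards [hopen'.mem_nhds h2mem] with w hw
    rw [hf, hg]
    simp only
    rw [hurwitz_eq_of_one_lt_re a ha hw]
  have hEq := AnalyticOnNhd.eqOn_of_preconnected_of_eventuallyEq
    (hfd.analyticOnNhd hVopen) (hgd.analyticOnNhd hVopen) hVconn
    (show (2:ℂ) ∈ V by norm_num [hV]) hfg
  have hzV : z ∈ V := hz
  have hne : z - 1 ≠ 0 := sub_ne_zero.mpr hz1
  have h' : (z - 1) * HurwitzZeta.hurwitzZeta (a : UnitAddCircle) z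
      = (z - 1) * ((a : ℂ) ^ (-z) + riemannZeta z + zSum a z) := by
    have h0 := hEq hzV
    rw [hf, hg] at h0
    simp only at h0
    linear_combination h0
  exact mul_left_cancel₀ hne h'

/-- for `0 < Re s < 1`, `|Im s| > 1` and `1 ≤ p < 1/Re s`, the Hurwitz zeta
function `a ↦ ζ(s,a)` belongs to `L^p (0,1)`. -/
theorem hurwitzZeta_memLp (s : ℂ) (hσ0 : 0 < s.re) (hσ1 : s.re < 1) (ht : 1 < |s.im|)
    (p : ℝ) (hp1 : 1 ≤ p) (hp2 : p < 1 / s.re) :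
    MeasureTheory.MemLp (fun a : ℝ => HurwitzZeta.hurwitzZeta (a : UnitAddCircle) s)
      (ENNReal.ofReal p) (MeasureTheory.volume.restrict (Set.Ioo (0 : ℝ) 1)) := by
  have hp0 : 0 < p := lt_of_lt_of_le one_pos hp1
  set P : ENNReal := ENNReal.ofReal p with hP
  have hP0 : P ≠ 0 := by simp [hP, ENNReal.ofReal_eq_zero]; linarith
  have hPtop : P ≠ ⊤ := ENNReal.ofReal_ne_top
  have hPtoReal : P.toReal = p := ENNReal.toReal_ofReal hp0.le
  set μ : Measure ℝ := volume.restrict (Ioo (0:ℝ) 1) with hμ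
  haveI : IsFiniteMeasure μ := by
    constructor
    rw [hμ, Measure.restrict_apply_univ, Real.volume_Ioo]
    exact ENNReal.ofReal_lt_top
  have hs1 : s ≠ 1 := fun h => by rw [h] at hσ1; norm_num at hσ1
  -- part 1 : the cpow part
  have hcont1 : ContinuousOn (fun a : ℝ => (a : ℂ) ^ (-s)) (Ioo (0:ℝ) 1) := by
    intro a haI
    refine ContinuousAt.continuousWithinAt ?_
    have hc : ContinuousAt (fun x : ℂ => x ^ (-s)) ((a : ℝ) : ℂ) := by
      refine continuousAt_cpow_const ?_
      rw [Complex.mem_slitPlane_iff]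
      left
      simpa using haI.1
    exact ContinuousAt.comp (x := a) (g := fun x : ℂ => x ^ (-s))
      (f := fun a : ℝ => ((a : ℝ) : ℂ)) hc (by fun_prop)
  have hmeas1 : AEStronglyMeasurable (fun a : ℝ => (a : ℂ) ^ (-s)) μ :=
    hcont1.aestronglyMeasurable measurableSet_Ioo
  have hexp : -(1:ℝ) < -(s.re * p) := by
    have h1 : s.re * p < s.re * (1 / s.re) := mul_lt_mul_of_pos_left hp2 hσ0
    rw [mul_one_div_cancel hσ0.ne'] at h1
    linarith
  have hint : Integrable (fun a : ℝ => ‖(a : ℂ) ^ (-s)‖ ^ p) μ := by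
    have hbase : IntegrableOn (fun a : ℝ => a ^ (-(s.re * p))) (Ioo (0:ℝ) 1) :=
      (intervalIntegral.integrableOn_Ioo_rpow_iff one_pos).mpr hexp
    refine (hbase : Integrable _ μ).congr ?_
    rw [Filter.EventuallyEq, ae_restrict_iff' measurableSet_Ioo]
    refine ae_of_all _ fun a haI => ?_
    rw [Complex.norm_cpow_eq_rpow_re_of_pos haI.1, Complex.neg_re,
      neg_mul_eq_neg_mul, Real.rpow_mul haI.1.le]
  have h1 : MemLp (fun a : ℝ => (a : ℂ) ^ (-s)) P μ := by
    have := (memLp_norm_rpow_iff (p := P) (q := P) hmeas1 hP0 hPtop)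
    rw [ENNReal.div_self hP0 hPtop, hPtoReal] at this
    exact this.mp (memLp_one_iff_integrable.mpr hint)
  -- part 2 : the bounded part
  have hcont2 : ContinuousOn (fun a : ℝ => riemannZeta s + zSum a s) (Ioo (0:ℝ) 1) :=
    continuousOn_const.add (continuousOn_zSum s hσ0)
  have hmeas2 : AEStronglyMeasurable (fun a : ℝ => riemannZeta s + zSum a s) μ :=
    hcont2.aestronglyMeasurable measurableSet_Ioo
  have h2 : MemLp (fun a : ℝ => riemannZeta s + zSum a s) P μ := by
    refine MemLp.of_bound hmeas2
      (‖riemannZeta s‖ + ‖s‖ * ∑' n : ℕ, ((n : ℝ) + 1) ^ (-s.re - 1)) ?_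
    rw [hμ, ae_restrict_iff' measurableSet_Ioo]
    refine ae_of_all _ fun a haI => ?_
    refine (norm_add_le _ _).trans ?_
    exact add_le_add le_rfl (zSum_bound a ⟨haI.1.le, haI.2.le⟩ hσ0)
  -- combine
  refine (h1.add h2).ae_eq ?_
  rw [hμ, Filter.EventuallyEq, ae_restrict_iff' measurableSet_Ioo]
  refine ae_of_all _ fun a haI => ?_
  simp only [Pi.add_apply]
  rw [hurwitz_eq a haI hσ0 hs1]
  ring
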